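/- Let 1 ≤ p < q < ∞ and 0 < r < s. There exists a finite constant c(p,q,r,s), depending only on p, q, r, s, such that for all probability measures φ and ψ on ℝ with characteristic functions φ̂ and ψ̂, D_{r,p}(φ,ψ) ≤ c(p,q,r,s)·D_{s,q}(φ,ψ)^{r/s}. -/

import Mathlib

open MeasureTheory Set
open scoped ENNReal

/-- The characteristic function (Fourier transform) of a measure on `ℝ`,
`φ̂(ξ) = ∫ e^{-iξv} dφ(v)`. -/
noncomputable def charFn (μ : Measure ℝ) (ξ : ℝ) : ℂ :=
  ∫ v, Complex.exp (-(ξ * v) * Complex.I) ∂μ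

/-- The Fourier-based metric
`D_{s,p}(φ,ψ) = (∫_ℝ |ξ|^{-(ps+1)} |φ̂(ξ) - ψ̂(ξ)|^p dξ)^{1/p}`,
with values in `ℝ≥0∞`. -/
noncomputable def DFourierP (s p : ℝ) (φ ψ : Measure ℝ) : ℝ≥0∞ :=
  (∫⁻ ξ : ℝ, ENNReal.ofReal (|ξ| ^ (-(p * s + 1))) *
      (ENNReal.ofReal ‖charFn φ ξ - charFn ψ ξ‖) ^ p) ^ (1 / p)


lemma norm_charFn_le_one (μ : Measure ℝ) [IsProbabilityMeasure μ] (ξ : ℝ) :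
    ‖charFn μ ξ‖ ≤ 1 := by
  calc ‖charFn μ ξ‖ ≤ ∫ v, ‖Complex.exp (-(ξ * v) * Complex.I)‖ ∂μ :=
        norm_integral_le_integral_norm _
    _ = 1 := by
        simp [Complex.norm_exp]

lemma continuous_charFn (μ : Measure ℝ) [IsProbabilityMeasure μ] :
    Continuous (charFn μ) := by
  apply continuous_of_dominated (bound := fun _ => 1)
  · intro ξ
    exact (Continuous.aestronglyMeasurable (by fun_prop))
  · intro ξ
    filter_upwards with v
    simp [Complex.norm_exp]
  · simp [integrable_const]
  · filter_upwards with v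
    fun_prop


lemma aux_ofReal_rpow {x u v : ℝ} (hx : 0 ≤ x) (hv : 0 < v) :
    (ENNReal.ofReal (x ^ u)) ^ v = ENNReal.ofReal (x ^ (u * v)) := by
  rcases hx.eq_or_lt with h | h
  · subst h
    rcases eq_or_ne u 0 with hu | hu
    · simp [hu]
    · rw [Real.zero_rpow hu, Real.zero_rpow (by positivity : u * v ≠ 0)]
      simp [ENNReal.zero_rpow_of_pos hv]
  · rw [← ENNReal.ofReal_rpow_of_pos h, ← ENNReal.rpow_mul,
      ENNReal.ofReal_rpow_of_pos h]

lemma lint_neg_pre (g : ℝ → ℝ≥0∞) (T : Set ℝ) :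
    ∫⁻ x in Neg.neg ⁻¹' T, g (-x) = ∫⁻ x in T, g x :=
  (Measure.measurePreserving_neg volume).setLIntegral_comp_preimage_emb
    (MeasurableEquiv.neg ℝ).measurableEmbedding g T

lemma lint_tail {e R : ℝ} (he : e < -1) (hR : 0 < R) :
    ∫⁻ ξ in {ξ : ℝ | R < |ξ|}, ENNReal.ofReal (|ξ| ^ e) =
      2 * ENNReal.ofReal (-R ^ (e + 1) / (e + 1)) := by
  have hIoi : ∫⁻ ξ in Ioi R, ENNReal.ofReal (|ξ| ^ e)
      = ENNReal.ofReal (-R ^ (e + 1) / (e + 1)) := by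
    rw [setLIntegral_congr_fun measurableSet_Ioi
      (fun x (hx : x ∈ Ioi R) => by
        rw [abs_of_pos (hR.trans hx)])]
    rw [← ofReal_integral_eq_lintegral_ofReal (integrableOn_Ioi_rpow_of_lt he hR)
      (by filter_upwards [ae_restrict_mem measurableSet_Ioi] with x hx
          exact Real.rpow_nonneg (hR.trans hx).le e)]
    rw [integral_Ioi_rpow_of_lt he hR]
  have hIio : ∫⁻ ξ in Iio (-R), ENNReal.ofReal (|ξ| ^ e)
      = ENNReal.ofReal (-R ^ (e + 1) / (e + 1)) := by
    have hpre : Iio (-R) = Neg.neg ⁻¹' (Ioi R) := by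
      ext x; simp [lt_neg]
    rw [hpre, show (fun ξ : ℝ => ENNReal.ofReal (|ξ| ^ e))
        = fun ξ : ℝ => ENNReal.ofReal (|(-ξ)| ^ e) from funext fun x => by rw [abs_neg],
      lint_neg_pre (fun x => ENNReal.ofReal (|x| ^ e)) (Ioi R), hIoi]
  have hset : {ξ : ℝ | R < |ξ|} = Iio (-R) ∪ Ioi R := by
    ext x
    simp only [mem_setOf_eq, lt_abs, mem_union, mem_Iio, mem_Ioi]
    constructor
    · rintro (h | h)
      · exact Or.inr h
      · exact Or.inl (by linarith)
    · rintro (h | h)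
      · exact Or.inr (by linarith)
      · exact Or.inl h
  rw [hset, lintegral_union measurableSet_Ioi
    (Set.disjoint_left.mpr (fun x hx hx2 => by
      simp only [mem_Iio] at hx; simp only [mem_Ioi] at hx2; linarith)),
    hIio, hIoi, two_mul]

lemma lint_ball {α R : ℝ} (hα : -1 < α) (hR : 0 < R) :
    ∫⁻ ξ in {ξ : ℝ | |ξ| ≤ R}, ENNReal.ofReal (|ξ| ^ α) =
      2 * ENNReal.ofReal (R ^ (α + 1) / (α + 1)) := by
  have hIoc : ∫⁻ ξ in Ioc 0 R, ENNReal.ofReal (|ξ| ^ α)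
      = ENNReal.ofReal (R ^ (α + 1) / (α + 1)) := by
    rw [setLIntegral_congr_fun measurableSet_Ioc
      (fun x (hx : x ∈ Ioc 0 R) => by
        rw [abs_of_pos hx.1])]
    have hint : IntegrableOn (fun x : ℝ => x ^ α) (Ioc 0 R) :=
      (intervalIntegrable_iff_integrableOn_Ioc_of_le hR.le).mp
        (intervalIntegral.intervalIntegrable_rpow' hα)
    rw [← ofReal_integral_eq_lintegral_ofReal hint
      (by filter_upwards [ae_restrict_mem measurableSet_Ioc] with x hx
          exact Real.rpow_nonneg hx.1.le α)]
    rw [← intervalIntegral.integral_of_le hR.le,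
      integral_rpow (Or.inl hα),
      Real.zero_rpow (ne_of_gt (by linarith) : α + 1 ≠ 0), sub_zero]
  have hIcc : ∫⁻ ξ in Icc 0 R, ENNReal.ofReal (|ξ| ^ α)
      = ENNReal.ofReal (R ^ (α + 1) / (α + 1)) := by
    rw [← setLIntegral_congr (Ioc_ae_eq_Icc (μ := volume) (a := 0) (b := R)), hIoc]
  have hNeg : ∫⁻ ξ in Neg.neg ⁻¹' (Ioc 0 R), ENNReal.ofReal (|ξ| ^ α)
      = ENNReal.ofReal (R ^ (α + 1) / (α + 1)) := by
    rw [show (fun ξ : ℝ => ENNReal.ofReal (|ξ| ^ α))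
        = fun ξ : ℝ => ENNReal.ofReal (|(-ξ)| ^ α) from funext fun x => by rw [abs_neg],
      lint_neg_pre (fun x => ENNReal.ofReal (|x| ^ α)) (Ioc 0 R), hIoc]
  have hset : {ξ : ℝ | |ξ| ≤ R} = (Neg.neg ⁻¹' (Ioc 0 R)) ∪ Icc 0 R := by
    ext x
    simp only [mem_setOf_eq, abs_le, mem_union, mem_preimage, mem_Ioc, mem_Icc]
    constructor
    · rintro ⟨h1, h2⟩
      rcases lt_or_ge x 0 with h | h
      · exact Or.inl ⟨by linarith, by linarith⟩
      · exact Or.inr ⟨h, h2⟩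
    · rintro (⟨h1, h2⟩ | ⟨h1, h2⟩) <;> constructor <;> linarith
  rw [hset, lintegral_union measurableSet_Icc
    (Set.disjoint_left.mpr (fun x hx hx2 => by
      simp only [mem_preimage, mem_Ioc] at hx
      simp only [mem_Icc] at hx2
      linarith [hx.1, hx2.1])),
    hNeg, hIcc, two_mul]

lemma key (p q r s : ℝ) (hp : 1 ≤ p) (hpq : p < q) (hr : 0 < r) (hrs : r < s) :
    ∃ C : ℝ≥0∞, C ≠ ⊤ ∧ C ≠ 0 ∧ ∀ f : ℝ → ℝ≥0∞, Measurable f → (∀ ξ, f ξ ≤ 2) →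
      (∫⁻ ξ : ℝ, ENNReal.ofReal (|ξ| ^ (-(p * r + 1))) * f ξ ^ p) ≤
        C * (∫⁻ ξ : ℝ, ENNReal.ofReal (|ξ| ^ (-(q * s + 1))) * f ξ ^ q)
            ^ (p * r / (q * s)) := by
  have hp0 : 0 < p := lt_of_lt_of_le one_pos hp
  have hq0 : 0 < q := hp0.trans hpq
  have hs0 : 0 < s := hr.trans hrs
  have hqp : 0 < q - p := sub_pos.mpr hpq
  have hsr : 0 < s - r := sub_pos.mpr hrs
  set α : ℝ := p * q * (s - r) / (q - p) - 1 with hα_def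
  have hα1 : 0 < α + 1 := by
    have : 0 < p * q * (s - r) / (q - p) := by positivity
    simp only [hα_def]; linarith
  have hα : -1 < α := by linarith
  set C : ℝ≥0∞ := (2 : ℝ≥0∞) ^ ((q - p) / q) * ENNReal.ofReal (1 / (α + 1)) ^ ((q - p) / q)
      + 2 ^ p * 2 * ENNReal.ofReal (1 / (p * r)) with hC_def
  have hCtop : C ≠ ⊤ := by
    apply ENNReal.add_ne_top.mpr
    constructor
    · exact ENNReal.mul_ne_top
        (ENNReal.rpow_ne_top_of_nonneg (by positivity) ENNReal.ofNat_ne_top)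
        (ENNReal.rpow_ne_top_of_nonneg (by positivity) ENNReal.ofReal_ne_top)
    · exact ENNReal.mul_ne_top
        (ENNReal.mul_ne_top (ENNReal.rpow_ne_top_of_nonneg hp0.le ENNReal.ofNat_ne_top)
          ENNReal.ofNat_ne_top) ENNReal.ofReal_ne_top
  have hC0 : C ≠ 0 := by
    intro h
    rw [hC_def, add_eq_zero] at h
    have h2 := h.2
    rw [mul_eq_zero, mul_eq_zero] at h2
    rcases h2 with (h2 | h2) | h2
    · exact (ENNReal.rpow_pos (by norm_num) ENNReal.ofNat_ne_top).ne' h2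
    · norm_num at h2
    · rw [ENNReal.ofReal_eq_zero] at h2
      have : (0 : ℝ) < 1 / (p * r) := by positivity
      linarith
  refine ⟨C, hCtop, hC0, fun f hf hf2 => ?_⟩
  set A : ℝ≥0∞ := ∫⁻ ξ : ℝ, ENNReal.ofReal (|ξ| ^ (-(q * s + 1))) * f ξ ^ q with hA_def
  -- case A = 0
  rcases eq_or_ne A 0 with h0 | h0
  · -- f = 0 a.e., so LHS = 0
    have hmeas : Measurable fun ξ : ℝ =>
        ENNReal.ofReal (|ξ| ^ (-(q * s + 1))) * f ξ ^ q := by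
      fun_prop
    have hae : ∀ᵐ ξ : ℝ, ENNReal.ofReal (|ξ| ^ (-(q * s + 1))) * f ξ ^ q = 0 :=
      (lintegral_eq_zero_iff hmeas).mp h0
    have hzero : ∀ᵐ ξ : ℝ, ENNReal.ofReal (|ξ| ^ (-(p * r + 1))) * f ξ ^ p = 0 := by
      have hne : ∀ᵐ ξ : ℝ, ξ ≠ (0 : ℝ) := by
        rw [ae_iff]
        simpa using (by simp : volume ({(0:ℝ)}) = 0)
      filter_upwards [hae, hne] with ξ hξ hξ0
      have habs : 0 < |ξ| := abs_pos.mpr hξ0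
      have hw : ENNReal.ofReal (|ξ| ^ (-(q * s + 1))) ≠ 0 :=
        (ENNReal.ofReal_pos.mpr (by positivity)).ne'
      have hfq : f ξ ^ q = 0 := by
        rcases mul_eq_zero.mp hξ with h | h
        · exact absurd h hw
        · exact h
      have hf0 : f ξ = 0 := by
        rcases ENNReal.rpow_eq_zero_iff.mp hfq with ⟨h, _⟩ | ⟨_, h⟩
        · exact h
        · linarith
      rw [hf0, ENNReal.zero_rpow_of_pos hp0, mul_zero]
    rw [lintegral_congr_ae hzero, lintegral_zero]
    exact zero_le
  -- case A = ⊤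
  rcases eq_or_ne A ⊤ with htop | htop
  · rw [htop, ENNReal.top_rpow_of_pos (by positivity), ENNReal.mul_top hC0]
    exact le_top
  -- main case
  have hv : 0 < (q - p) / q := by positivity
  set a0 : ℝ := A.toReal with ha0_def
  have ha0 : 0 < a0 := ENNReal.toReal_pos h0 htop
  have hAeq : ENNReal.ofReal a0 = A := ENNReal.ofReal_toReal htop
  set R : ℝ := a0 ^ (-(1 / (q * s))) with hR_def
  have hRpos : 0 < R := Real.rpow_pos_of_pos ha0 _
  have hRpow : ∀ t : ℝ, R ^ t = a0 ^ (-(1 / (q * s)) * t) := fun t => by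
    rw [hR_def, ← Real.rpow_mul ha0.le]
  have hofA : ∀ E : ℝ, ENNReal.ofReal (a0 ^ E) = A ^ E := fun E => by
    rw [← ENNReal.ofReal_rpow_of_pos ha0, hAeq]
  set S : Set ℝ := {ξ : ℝ | |ξ| ≤ R} with hS_def
  have hSm : MeasurableSet S := (isClosed_le continuous_abs continuous_const).measurableSet
  set e3 : ℝ := (q * s + 1) * (p / q) - (p * r + 1) with he3_def
  set g1 : ℝ → ℝ≥0∞ :=
    fun ξ => (ENNReal.ofReal (|ξ| ^ (-(q * s + 1))) * f ξ ^ q) ^ (p / q) with hg1_def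
  set g2 : ℝ → ℝ≥0∞ := fun ξ => ENNReal.ofReal (|ξ| ^ e3) with hg2_def
  have hpqd : 0 < p / q := by positivity
  have hpt : ∀ ξ : ℝ, ENNReal.ofReal (|ξ| ^ (-(p * r + 1))) * f ξ ^ p = g1 ξ * g2 ξ := by
    intro ξ
    rcases eq_or_ne ξ 0 with h | h
    · subst h
      simp only [hg1_def, hg2_def, abs_zero]
      rw [Real.zero_rpow (show -(p * r + 1) ≠ 0 by nlinarith [mul_pos hp0 hr]),
        Real.zero_rpow (show -(q * s + 1) ≠ 0 by nlinarith [mul_pos hq0 hs0])]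
      simp [ENNReal.zero_rpow_of_pos hpqd]
    · have habs : 0 < |ξ| := abs_pos.mpr h
      have h1 : g1 ξ = ENNReal.ofReal (|ξ| ^ (-(q * s + 1) * (p / q))) * f ξ ^ p := by
        simp only [hg1_def]
        rw [ENNReal.mul_rpow_of_nonneg _ _ hpqd.le, aux_ofReal_rpow (abs_nonneg ξ) hpqd,
          ← ENNReal.rpow_mul]
        rw [show q * (p / q) = p from by field_simp]
      have h2 : ENNReal.ofReal (|ξ| ^ (-(q * s + 1) * (p / q))) * ENNReal.ofReal (|ξ| ^ e3)
          = ENNReal.ofReal (|ξ| ^ (-(p * r + 1))) := by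
        rw [← ENNReal.ofReal_mul (Real.rpow_nonneg (abs_nonneg ξ) _),
          ← Real.rpow_add habs, he3_def]
        rw [show -(q * s + 1) * (p / q) + ((q * s + 1) * (p / q) - (p * r + 1))
          = -(p * r + 1) from by ring]
      calc ENNReal.ofReal (|ξ| ^ (-(p * r + 1))) * f ξ ^ p
          = ENNReal.ofReal (|ξ| ^ (-(q * s + 1) * (p / q))) * ENNReal.ofReal (|ξ| ^ e3)
            * f ξ ^ p := by rw [h2]
        _ = g1 ξ * g2 ξ := by rw [h1]; simp only [hg2_def]; ring
  have hg1m : Measurable g1 := by rw [hg1_def]; fun_prop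
  have hg2m : Measurable g2 := by rw [hg2_def]; fun_prop
  have hconj : (q / p).HolderConjugate (q / (q - p)) := by
    rw [Real.holderConjugate_iff]
    constructor
    · exact (one_lt_div hp0).mpr hpq
    · rw [inv_div, inv_div]
      field_simp
      ring
  have hholder := ENNReal.lintegral_mul_le_Lp_mul_Lq (volume.restrict S) hconj
    hg1m.aemeasurable hg2m.aemeasurable
  have hg1pow : ∀ ξ, g1 ξ ^ (q / p) = ENNReal.ofReal (|ξ| ^ (-(q * s + 1))) * f ξ ^ q := by
    intro ξ
    simp only [hg1_def]
    rw [← ENNReal.rpow_mul, show p / q * (q / p) = 1 from by field_simp,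
      ENNReal.rpow_one]
  have hbound1 : (∫⁻ ξ in S, g1 ξ ^ (q / p)) ≤ A := by
    calc (∫⁻ ξ in S, g1 ξ ^ (q / p))
        = ∫⁻ ξ in S, ENNReal.ofReal (|ξ| ^ (-(q * s + 1))) * f ξ ^ q := by
          simp only [hg1pow]
      _ ≤ A := setLIntegral_le_lintegral _ _
  have hg2pow : ∀ ξ : ℝ, g2 ξ ^ (q / (q - p)) = ENNReal.ofReal (|ξ| ^ α) := by
    intro ξ
    simp only [hg2_def]
    rw [aux_ofReal_rpow (abs_nonneg ξ) (by positivity : 0 < q / (q - p))]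
    rw [show e3 * (q / (q - p)) = α from by rw [he3_def, hα_def]; field_simp; ring]
  have hball : (∫⁻ ξ in S, g2 ξ ^ (q / (q - p)))
      = 2 * ENNReal.ofReal (R ^ (α + 1) / (α + 1)) := by
    calc (∫⁻ ξ in S, g2 ξ ^ (q / (q - p)))
        = ∫⁻ ξ in S, ENNReal.ofReal (|ξ| ^ α) := by simp only [hg2pow]
      _ = 2 * ENNReal.ofReal (R ^ (α + 1) / (α + 1)) := by
          rw [hS_def]; exact lint_ball hα hRpos
  have hinner : (∫⁻ ξ in S, ENNReal.ofReal (|ξ| ^ (-(p * r + 1))) * f ξ ^ p)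
      ≤ A ^ (p / q) * (2 * ENNReal.ofReal (R ^ (α + 1) / (α + 1))) ^ ((q - p) / q) := by
    calc (∫⁻ ξ in S, ENNReal.ofReal (|ξ| ^ (-(p * r + 1))) * f ξ ^ p)
        = ∫⁻ ξ in S, (g1 * g2) ξ := by
          simp only [Pi.mul_apply]; exact lintegral_congr fun ξ => hpt ξ
      _ ≤ (∫⁻ ξ in S, g1 ξ ^ (q / p)) ^ (1 / (q / p))
            * (∫⁻ ξ in S, g2 ξ ^ (q / (q - p))) ^ (1 / (q / (q - p))) := hholder
      _ = (∫⁻ ξ in S, g1 ξ ^ (q / p)) ^ (p / q)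
            * (∫⁻ ξ in S, g2 ξ ^ (q / (q - p))) ^ ((q - p) / q) := by
          rw [one_div_div, one_div_div]
      _ ≤ A ^ (p / q) * (2 * ENNReal.ofReal (R ^ (α + 1) / (α + 1))) ^ ((q - p) / q) := by
          rw [hball]
          exact mul_le_mul_left (ENNReal.rpow_le_rpow hbound1 hpqd.le) _
  have hcompl : Sᶜ = {ξ : ℝ | R < |ξ|} := by
    ext x; simp [hS_def, not_le]
  have hprpos : 0 < p * r := mul_pos hp0 hr
  have htail : (∫⁻ ξ in Sᶜ, ENNReal.ofReal (|ξ| ^ (-(p * r + 1))) * f ξ ^ p)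
      ≤ 2 ^ p * (2 * ENNReal.ofReal (-R ^ (-(p * r + 1) + 1) / (-(p * r + 1) + 1))) := by
    calc (∫⁻ ξ in Sᶜ, ENNReal.ofReal (|ξ| ^ (-(p * r + 1))) * f ξ ^ p)
        ≤ ∫⁻ ξ in Sᶜ, ENNReal.ofReal (|ξ| ^ (-(p * r + 1))) * 2 ^ p :=
          lintegral_mono fun ξ => mul_le_mul_right
            (by
              calc f ξ ^ p ≤ (2 : ℝ≥0∞) ^ p := ENNReal.rpow_le_rpow (hf2 ξ) hp0.le) _
      _ = (∫⁻ ξ in Sᶜ, ENNReal.ofReal (|ξ| ^ (-(p * r + 1)))) * 2 ^ p :=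
          lintegral_mul_const _ (by fun_prop)
      _ = 2 ^ p * (2 * ENNReal.ofReal (-R ^ (-(p * r + 1) + 1) / (-(p * r + 1) + 1))) := by
          rw [hcompl, lint_tail (show -(p * r + 1) < -1 by linarith) hRpos]
          ring
  -- simplify the two bounds into C * A ^ (p*r/(q*s))
  have hT1 : A ^ (p / q) * (2 * ENNReal.ofReal (R ^ (α + 1) / (α + 1))) ^ ((q - p) / q)
      = 2 ^ ((q - p) / q) * ENNReal.ofReal (1 / (α + 1)) ^ ((q - p) / q)
          * A ^ (p * r / (q * s)) := by
    have hX1 : ENNReal.ofReal (R ^ (α + 1) / (α + 1))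
        = ENNReal.ofReal (R ^ (α + 1)) * ENNReal.ofReal (1 / (α + 1)) := by
      rw [div_eq_mul_one_div, ENNReal.ofReal_mul (Real.rpow_nonneg hRpos.le _)]
    have hX2 : (ENNReal.ofReal (R ^ (α + 1))) ^ ((q - p) / q)
        = A ^ (-(1 / (q * s)) * (α + 1) * ((q - p) / q)) := by
      rw [hRpow (α + 1), aux_ofReal_rpow ha0.le hv, hofA]
    have hE : p / q + -(1 / (q * s)) * (α + 1) * ((q - p) / q) = p * r / (q * s) := by
      rw [hα_def]
      field_simp
      ring
    calc A ^ (p / q) * (2 * ENNReal.ofReal (R ^ (α + 1) / (α + 1))) ^ ((q - p) / q)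
        = A ^ (p / q) * (2 ^ ((q - p) / q)
            * ((ENNReal.ofReal (R ^ (α + 1))) ^ ((q - p) / q)
              * ENNReal.ofReal (1 / (α + 1)) ^ ((q - p) / q))) := by
          rw [hX1, ← mul_assoc, ENNReal.mul_rpow_of_nonneg _ _ hv.le,
            ENNReal.mul_rpow_of_nonneg _ _ hv.le]
          ring
      _ = 2 ^ ((q - p) / q) * ENNReal.ofReal (1 / (α + 1)) ^ ((q - p) / q)
            * (A ^ (p / q) * A ^ (-(1 / (q * s)) * (α + 1) * ((q - p) / q))) := by
          rw [hX2]; ring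
      _ = 2 ^ ((q - p) / q) * ENNReal.ofReal (1 / (α + 1)) ^ ((q - p) / q)
            * A ^ (p * r / (q * s)) := by
          rw [← ENNReal.rpow_add _ _ h0 htop, hE]
  have hT2 : (2 : ℝ≥0∞) ^ p
        * (2 * ENNReal.ofReal (-R ^ (-(p * r + 1) + 1) / (-(p * r + 1) + 1)))
      = 2 ^ p * 2 * ENNReal.ofReal (1 / (p * r)) * A ^ (p * r / (q * s)) := by
    have h1 : -R ^ (-(p * r + 1) + 1) / (-(p * r + 1) + 1)
        = R ^ (-(p * r)) * (1 / (p * r)) := by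
      rw [show -(p * r + 1) + 1 = -(p * r) from by ring]
      rw [div_eq_mul_one_div]
      rw [show (1 : ℝ) / -(p * r) = -(1 / (p * r)) from by field_simp]
      ring
    have h2 : ENNReal.ofReal (R ^ (-(p * r)))
        = A ^ (p * r / (q * s)) := by
      rw [hRpow (-(p * r)), show -(1 / (q * s)) * -(p * r) = p * r / (q * s) from by
        field_simp, hofA]
    rw [h1, ENNReal.ofReal_mul (Real.rpow_nonneg hRpos.le _), h2]
    ring
  calc (∫⁻ ξ : ℝ, ENNReal.ofReal (|ξ| ^ (-(p * r + 1))) * f ξ ^ p)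
      = (∫⁻ ξ in S, ENNReal.ofReal (|ξ| ^ (-(p * r + 1))) * f ξ ^ p)
        + ∫⁻ ξ in Sᶜ, ENNReal.ofReal (|ξ| ^ (-(p * r + 1))) * f ξ ^ p :=
        (lintegral_add_compl _ hSm).symm
    _ ≤ A ^ (p / q) * (2 * ENNReal.ofReal (R ^ (α + 1) / (α + 1))) ^ ((q - p) / q)
        + 2 ^ p * (2 * ENNReal.ofReal (-R ^ (-(p * r + 1) + 1) / (-(p * r + 1) + 1))) :=
        add_le_add hinner htail
    _ = C * A ^ (p * r / (q * s)) := by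
        rw [hT1, hT2, hC_def]
        ring

theorem stmt_2 (p q r s : ℝ) (hp : 1 ≤ p) (hpq : p < q) (hr : 0 < r) (hrs : r < s) :
    ∃ c : ℝ≥0∞, c ≠ ⊤ ∧
      ∀ (φ ψ : Measure ℝ), IsProbabilityMeasure φ → IsProbabilityMeasure ψ →
        DFourierP r p φ ψ ≤ c * DFourierP s q φ ψ ^ (r / s) := by
  have hp0 : 0 < p := lt_of_lt_of_le one_pos hp
  have hq0 : 0 < q := hp0.trans hpq
  have hs0 : 0 < s := hr.trans hrs
  obtain ⟨C, hCtop, hC0, hkey⟩ := key p q r s hp hpq hr hrs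
  refine ⟨C ^ (1 / p), ENNReal.rpow_ne_top_of_nonneg (by positivity) hCtop,
    fun φ ψ hφ hψ => ?_⟩
  set f : ℝ → ℝ≥0∞ := fun ξ => ENNReal.ofReal ‖charFn φ ξ - charFn ψ ξ‖ with hf_def
  have hfm : Measurable f :=
    (((continuous_charFn φ).sub (continuous_charFn ψ)).norm.measurable).ennreal_ofReal
  have hf2 : ∀ ξ, f ξ ≤ 2 := by
    intro ξ
    have hn : ‖charFn φ ξ - charFn ψ ξ‖ ≤ 2 := by
      calc ‖charFn φ ξ - charFn ψ ξ‖ ≤ ‖charFn φ ξ‖ + ‖charFn ψ ξ‖ := norm_sub_le _ _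
        _ ≤ 2 := by linarith [norm_charFn_le_one φ ξ, norm_charFn_le_one ψ ξ]
    calc f ξ ≤ ENNReal.ofReal 2 := ENNReal.ofReal_le_ofReal hn
      _ = 2 := by norm_num
  have hB := hkey f hfm hf2
  simp only [DFourierP]
  calc (∫⁻ ξ : ℝ, ENNReal.ofReal (|ξ| ^ (-(p * r + 1))) *
          (ENNReal.ofReal ‖charFn φ ξ - charFn ψ ξ‖) ^ p) ^ (1 / p)
      ≤ (C * (∫⁻ ξ : ℝ, ENNReal.ofReal (|ξ| ^ (-(q * s + 1))) *
          (ENNReal.ofReal ‖charFn φ ξ - charFn ψ ξ‖) ^ q) ^ (p * r / (q * s))) ^ (1 / p) :=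
        ENNReal.rpow_le_rpow hB (by positivity)
    _ = C ^ (1 / p) * ((∫⁻ ξ : ℝ, ENNReal.ofReal (|ξ| ^ (-(q * s + 1))) *
          (ENNReal.ofReal ‖charFn φ ξ - charFn ψ ξ‖) ^ q) ^ (p * r / (q * s))) ^ (1 / p) :=
        ENNReal.mul_rpow_of_nonneg _ _ (by positivity)
    _ = C ^ (1 / p) * ((∫⁻ ξ : ℝ, ENNReal.ofReal (|ξ| ^ (-(q * s + 1))) *
          (ENNReal.ofReal ‖charFn φ ξ - charFn ψ ξ‖) ^ q) ^ (1 / q)) ^ (r / s) := by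
        rw [← ENNReal.rpow_mul, ← ENNReal.rpow_mul,
          show p * r / (q * s) * (1 / p) = 1 / q * (r / s) from by field_simp]
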